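/- Let (Br_j)_{j≥0} be finite nonempty sets with Br_0 = {v_0} a singleton, let Br^(j) (j ≥ 1) be matrices with nonnegative integer entries indexed by Br_j × Br_{j-1} such that every column is nonzero (Br^(j)_{v,w} is the number of arrows from w ∈ Br_{j-1} to v ∈ Br_j in a Bratteli diagram Br), and let (d_i)_{i≥1} be natural numbers with d_i ≥ 2. Then there exist integers 0 = k_0 < k_1 < k_2 < ⋯ and matrices C^(j) (j ≥ 1) with strictly positive integer entries indexed by Br_j × Br_{j-1} such that: C^(j)_{v,w} > Br^(j)_{v,w} for all (v,w) ∈ Br_j × Br_{j-1} and all j; φ(C^(j) − Br^(j)) ≥ 1/4 for all j; and ∑_{w ∈ Br_j} (C^(j) C^(j-1) ⋯ C^(1))_{w,v_0} = ∏_{i=1}^{k_j} d_i for all j ≥ 1 (i.e. the total number of paths from v_0 to level j in the Bratteli diagram with multiplicity matrices C^(j) equals ∏_{i=1}^{k_j} d_i). -/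

import Mathlib

open scoped BigOperators
noncomputable section

open Classical in
/-- The matrix product `(A^(1) A^(2) ⋯ A^(k))_{v,w}`; here `A n` is the matrix
from level `n` to level `n+1`. -/
def pathMat {L : ℕ → Type} [∀ n, Fintype (L n)]
    (A : ∀ n, L n → L (n+1) → ℝ) : ∀ k, L 0 → L k → ℝ
  | 0, v, w => if v = w then 1 else 0
  | (k+1), v, w => ∑ u, pathMat A k v u * A k u w

/-- `φ(B)` for a strictly positive matrix `B`:
the minimum of `B_{x,y} B_{x',y'} / (B_{x',y} B_{x,y'})`. -/
def phi {X Y : Type} [Fintype X] [Fintype Y] (B : X → Y → ℝ) : ℝ :=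
  ⨅ q : (X × X) × Y × Y, B q.1.1 q.2.1 * B q.1.2 q.2.2 / (B q.1.2 q.2.1 * B q.1.1 q.2.2)

section helpers

lemma sum_ite_range_min (m r : ℕ) :
    ∑ i ∈ Finset.range m, (if i < r then 1 else 0) = min r m := by
  induction m with
  | zero => simp
  | succ m ih =>
      rw [Finset.sum_range_succ, ih]
      rcases Nat.lt_or_ge m r with h | h
      · rw [if_pos h]; omega
      · rw [if_neg (by omega)]; omega

lemma sum_ite_range (m r : ℕ) (h : r ≤ m) :
    ∑ i ∈ Finset.range m, (if i < r then 1 else 0) = r := by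
  rw [sum_ite_range_min]; omega

variable {L : ℕ → Type} [∀ n, Fintype (L n)]

/-- The number of new `d` factors introduced at level `n`. -/
def bigN (M : ∀ n, L (n+1) → L n → ℕ) (n : ℕ) : ℕ :=
  Fintype.card (L (n+1)) + Finset.univ.sup (fun w : L n => ∑ v : L (n+1), M n v w)

/-- The sequence `k`. -/
def kfun (M : ∀ n, L (n+1) → L n → ℕ) : ℕ → ℕ
  | 0 => 0
  | (n+1) => kfun M n + bigN M n

/-- The common column sum `c_n` of `C^{(n)}`. -/
def cfun (M : ∀ n, L (n+1) → L n → ℕ) (d : ℕ → ℕ) (n : ℕ) : ℕ :=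
  ∏ i ∈ Finset.range (bigN M n), d (kfun M n + i)

/-- Required column sum of `B = C - M` in column `w`. -/
def Tfun (M : ∀ n, L (n+1) → L n → ℕ) (d : ℕ → ℕ) (n : ℕ) (w : L n) : ℕ :=
  cfun M d n - ∑ v : L (n+1), M n v w

/-- The matrix `B = C - M`: distribute `T` almost evenly over the column. -/
def Bfun (M : ∀ n, L (n+1) → L n → ℕ) (d : ℕ → ℕ) (n : ℕ) (v : L (n+1)) (w : L n) : ℕ :=
  Tfun M d n w / Fintype.card (L (n+1)) +
    (if ((Fintype.equivFin (L (n+1))) v : ℕ) < Tfun M d n w % Fintype.card (L (n+1))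
      then 1 else 0)

variable (M : ∀ n, L (n+1) → L n → ℕ) (d : ℕ → ℕ)

lemma bigN_le_cfun (hd : ∀ i, 2 ≤ d i) (n : ℕ) : bigN M n + 1 ≤ cfun M d n := by
  have h1 : 2 ^ (bigN M n) ≤ cfun M d n := by
    have : (2 : ℕ) ^ (bigN M n) = ∏ _i ∈ Finset.range (bigN M n), 2 := by
      rw [Finset.prod_const, Finset.card_range]
    rw [this, cfun]
    exact Finset.prod_le_prod' fun i _ => hd _
  have h2 : bigN M n + 1 ≤ 2 ^ (bigN M n) := Nat.lt_two_pow_self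
  omega

lemma colsum_le (n : ℕ) (w : L n) :
    ∑ v : L (n+1), M n v w ≤ Finset.univ.sup (fun w : L n => ∑ v : L (n+1), M n v w) :=
  Finset.le_sup (f := fun w : L n => ∑ v : L (n+1), M n v w) (Finset.mem_univ w)

lemma card_le_Tfun (hd : ∀ i, 2 ≤ d i) (n : ℕ) (w : L n) :
    Fintype.card (L (n+1)) ≤ Tfun M d n w := by
  have h1 := bigN_le_cfun M d hd n
  have h2 := colsum_le M n w
  rw [Tfun]
  rw [bigN] at h1
  omega

lemma colsum_le_cfun (hd : ∀ i, 2 ≤ d i) (n : ℕ) (w : L n) :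
    ∑ v : L (n+1), M n v w ≤ cfun M d n := by
  have h1 := bigN_le_cfun M d hd n
  have h2 := colsum_le M n w
  rw [bigN] at h1
  omega

variable [∀ n, Nonempty (L n)]

lemma one_le_q (hd : ∀ i, 2 ≤ d i) (n : ℕ) (w : L n) :
    1 ≤ Tfun M d n w / Fintype.card (L (n+1)) :=
  (Nat.one_le_div_iff Fintype.card_pos).2 (card_le_Tfun M d hd n w)

lemma Bfun_bounds (n : ℕ) (v : L (n+1)) (w : L n) :
    Tfun M d n w / Fintype.card (L (n+1)) ≤ Bfun M d n v w ∧
      Bfun M d n v w ≤ Tfun M d n w / Fintype.card (L (n+1)) + 1 := by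
  constructor
  · exact Nat.le_add_right _ _
  · rw [Bfun]
    split <;> omega

lemma Bfun_le_two_mul (hd : ∀ i, 2 ≤ d i) (n : ℕ) (v v' : L (n+1)) (w : L n) :
    Bfun M d n v w ≤ 2 * Bfun M d n v' w := by
  have h1 := Bfun_bounds M d n v w
  have h2 := Bfun_bounds M d n v' w
  have h3 := one_le_q M d hd n w
  omega

lemma sum_Bfun (n : ℕ) (w : L n) :
    ∑ v : L (n+1), Bfun M d n v w = Tfun M d n w := by
  have hcard : 0 < Fintype.card (L (n+1)) := Fintype.card_pos
  have hmod : Tfun M d n w % Fintype.card (L (n+1)) < Fintype.card (L (n+1)) :=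
    Nat.mod_lt _ hcard
  rw [show (fun v : L (n+1) => Bfun M d n v w) = fun v =>
      Tfun M d n w / Fintype.card (L (n+1)) +
        (if ((Fintype.equivFin (L (n+1))) v : ℕ) < Tfun M d n w % Fintype.card (L (n+1))
          then 1 else 0) from rfl]
  rw [Finset.sum_add_distrib, Finset.sum_const, Finset.card_univ, smul_eq_mul]
  have he : ∑ v : L (n+1),
      (if ((Fintype.equivFin (L (n+1))) v : ℕ) < Tfun M d n w % Fintype.card (L (n+1))
        then 1 else 0) = Tfun M d n w % Fintype.card (L (n+1)) := by
    rw [Fintype.sum_equiv (Fintype.equivFin (L (n+1)))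
      _ (fun i : Fin (Fintype.card (L (n+1))) =>
        if (i : ℕ) < Tfun M d n w % Fintype.card (L (n+1)) then 1 else 0) (fun v => rfl)]
    rw [Fin.sum_univ_eq_sum_range
      (fun i => if i < Tfun M d n w % Fintype.card (L (n+1)) then 1 else 0)]
    exact sum_ite_range _ _ (le_of_lt hmod)
  rw [he]
  have := Nat.div_add_mod (Tfun M d n w) (Fintype.card (L (n+1)))
  omega

lemma colsum_C (hd : ∀ i, 2 ≤ d i) (n : ℕ) (w : L n) :
    ∑ v : L (n+1), (M n v w + Bfun M d n v w) = cfun M d n := by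
  rw [Finset.sum_add_distrib, sum_Bfun, Tfun]
  have := colsum_le_cfun M d hd n w
  omega

end helpers

/-- Lemma 5.1: given the multiplicity matrices `M` of a Bratteli diagram and
`d_i ≥ 2`, there are a Bratteli diagram on the same level sets with strictly
larger multiplicity matrices `C`, with `φ(C^{(j)} − M^{(j)}) ≥ 1/4`, whose total
number of paths to level `j` equals `∏_{i<k_j} d_i` (so the associated AF algebra
is the UHF algebra determined by `(d_i)`). -/
theorem stmt_12 {L : ℕ → Type} [∀ n, Fintype (L n)] [∀ n, Nonempty (L n)]
    (v0 : L 0) (hsing : ∀ v : L 0, v = v0)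
    (M : ∀ n, L (n+1) → L n → ℕ)
    (hM : ∀ n (w : L n), ∃ v : L (n+1), M n v w ≠ 0)
    (d : ℕ → ℕ) (hd : ∀ i, 2 ≤ d i) :
    ∃ (k : ℕ → ℕ) (C : ∀ n, L (n+1) → L n → ℕ),
      k 0 = 0 ∧ StrictMono k ∧
      (∀ n v w, M n v w < C n v w) ∧
      (∀ n, (1/4 : ℝ) ≤
        phi fun (v : L (n+1)) (w : L n) => (C n v w : ℝ) - (M n v w : ℝ)) ∧
      (∀ j : ℕ, 1 ≤ j →
        (∑ w : L j, pathMat (fun n (x : L n) (y : L (n+1)) => (C n y x : ℝ)) j v0 w)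
          = ∏ i ∈ Finset.range (k j), (d i : ℝ)) := by
  classical
  refine ⟨kfun M, fun n v w => M n v w + Bfun M d n v w, rfl, ?_, ?_, ?_, ?_⟩
  · -- StrictMono
    apply strictMono_nat_of_lt_succ
    intro n
    have : 0 < bigN M n := by
      have : 0 < Fintype.card (L (n+1)) := Fintype.card_pos
      rw [bigN]; omega
    show kfun M n < kfun M n + bigN M n
    omega
  · -- M < C
    intro n v w
    show M n v w < M n v w + Bfun M d n v w
    have h1 := (Bfun_bounds M d n v w).1
    have h2 := one_le_q M d hd n w
    omega
  · -- phi bound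
    intro n
    have hfun : (fun (v : L (n+1)) (w : L n) =>
        ((M n v w + Bfun M d n v w : ℕ) : ℝ) - (M n v w : ℝ)) =
        fun v w => (Bfun M d n v w : ℝ) := by
      funext v w; push_cast; ring
    rw [hfun, phi]
    apply le_ciInf
    rintro ⟨⟨x, x'⟩, y, y'⟩
    have hpos : ∀ (v : L (n+1)) (w : L n), (0 : ℝ) < (Bfun M d n v w : ℝ) := by
      intro v w
      have h1 := (Bfun_bounds M d n v w).1
      have h2 := one_le_q M d hd n w
      exact_mod_cast (by omega : 0 < Bfun M d n v w)
    dsimp only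
    rw [le_div_iff₀ (mul_pos (hpos x' y) (hpos x y'))]
    have k1 : Bfun M d n x' y ≤ 2 * Bfun M d n x y := Bfun_le_two_mul M d hd n x' x y
    have k2 : Bfun M d n x y' ≤ 2 * Bfun M d n x' y' := Bfun_le_two_mul M d hd n x x' y'
    have k3 : Bfun M d n x' y * Bfun M d n x y' ≤
        4 * (Bfun M d n x y * Bfun M d n x' y') := by
      calc Bfun M d n x' y * Bfun M d n x y'
          ≤ (2 * Bfun M d n x y) * (2 * Bfun M d n x' y') := Nat.mul_le_mul k1 k2
        _ = 4 * (Bfun M d n x y * Bfun M d n x' y') := by ring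
    have k3' : ((Bfun M d n x' y : ℝ) * Bfun M d n x y') ≤
        4 * ((Bfun M d n x y : ℝ) * Bfun M d n x' y') := by exact_mod_cast k3
    linarith
  · -- path count
    have key : ∀ j : ℕ,
        (∑ w : L j, pathMat (fun n (x : L n) (y : L (n+1)) =>
            ((M n y x + Bfun M d n y x : ℕ) : ℝ)) j v0 w)
          = ∏ i ∈ Finset.range (kfun M j), (d i : ℝ) := by
      intro j
      induction j with
      | zero =>
          show (∑ w : L 0, if v0 = w then (1:ℝ) else 0) = _
          rw [show kfun M 0 = 0 from rfl]
          simp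
      | succ j ih =>
          have hcs : ∀ u : L j, (∑ x : L (j+1), ((M j x u + Bfun M d j x u : ℕ) : ℝ))
              = (cfun M d j : ℝ) := by
            intro u
            rw [← Nat.cast_sum, colsum_C M d hd j u]
          have hstep : (∑ w : L (j+1), pathMat (fun n (x : L n) (y : L (n+1)) =>
              ((M n y x + Bfun M d n y x : ℕ) : ℝ)) (j+1) v0 w)
              = (cfun M d j : ℝ) *
                ∑ u : L j, pathMat (fun n (x : L n) (y : L (n+1)) =>
                  ((M n y x + Bfun M d n y x : ℕ) : ℝ)) j v0 u := by
            calc (∑ w : L (j+1), pathMat (fun n (x : L n) (y : L (n+1)) =>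
                  ((M n y x + Bfun M d n y x : ℕ) : ℝ)) (j+1) v0 w)
                = ∑ w : L (j+1), ∑ u : L j, pathMat (fun n (x : L n) (y : L (n+1)) =>
                    ((M n y x + Bfun M d n y x : ℕ) : ℝ)) j v0 u *
                    ((M j w u + Bfun M d j w u : ℕ) : ℝ) := rfl
              _ = ∑ u : L j, ∑ w : L (j+1), pathMat (fun n (x : L n) (y : L (n+1)) =>
                    ((M n y x + Bfun M d n y x : ℕ) : ℝ)) j v0 u *
                    ((M j w u + Bfun M d j w u : ℕ) : ℝ) := Finset.sum_comm
              _ = ∑ u : L j, pathMat (fun n (x : L n) (y : L (n+1)) =>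
                    ((M n y x + Bfun M d n y x : ℕ) : ℝ)) j v0 u *
                    ∑ w : L (j+1), ((M j w u + Bfun M d j w u : ℕ) : ℝ) := by
                  exact Finset.sum_congr rfl fun u _ => (Finset.mul_sum _ _ _).symm
              _ = ∑ u : L j, pathMat (fun n (x : L n) (y : L (n+1)) =>
                    ((M n y x + Bfun M d n y x : ℕ) : ℝ)) j v0 u * (cfun M d j : ℝ) := by
                  exact Finset.sum_congr rfl fun u _ => by rw [hcs u]
              _ = _ := by rw [Finset.mul_sum]; exact Finset.sum_congr rfl fun u _ => mul_comm _ _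
          rw [hstep, ih]
          rw [show kfun M (j+1) = kfun M j + bigN M j from rfl]
          rw [Finset.prod_range_add]
          rw [show (cfun M d j : ℝ) = ∏ i ∈ Finset.range (bigN M j), (d (kfun M j + i) : ℝ) by
            rw [cfun]; push_cast; rfl]
          ring
    intro j _
    exact key j
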